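/- Strain error estimate, case h₀ > 1: for every p ∈ [1,∞], the relative strain error Err_p = ‖u^{scb}-u^a‖_{ℓ^p}/‖u^a‖_{ℓ^p} satisfies Err_p = C_p + O(e^{-α}) as α → ∞, where C_p = (|1-1/h₀|^p + (h₀-1)(1/h₀)^p)^{1/p} for p < ∞ (C_∞ = max(1-1/h₀, 1/h₀)), and the constant C_p satisfies 1/2 ≤ C_p ≤ 2. -/

import Mathlib

set_option maxHeartbeats 2000000


noncomputable def morseR0 (α : ℝ) : ℝ :=
  1 + (1 / α) * Real.log ((1 + 2 * Real.exp (-α)) / (1 + 2 * Real.exp (-2 * α)))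

noncomputable def morse (α φ₀ : ℝ) (r : ℝ) : ℝ :=
  Real.exp (-2 * α * (r - morseR0 α)) - 2 * Real.exp (-α * (r - morseR0 α)) - φ₀

lemma morse_deriv (α φ₀ : ℝ) : deriv (morse α φ₀) = fun r =>
    (-2*α) * Real.exp (-2 * α * (r - morseR0 α)) + (2*α) * Real.exp (-α * (r - morseR0 α)) := by
  funext r
  have h1 : HasDerivAt (fun r : ℝ => -2 * α * (r - morseR0 α)) (-2*α) r := by
    simpa using ((hasDerivAt_id r).sub_const (morseR0 α)).const_mul (-2*α)
  have h2 : HasDerivAt (fun r : ℝ => -α * (r - morseR0 α)) (-α) r := by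
    simpa using ((hasDerivAt_id r).sub_const (morseR0 α)).const_mul (-α)
  have H := ((h1.exp).sub ((h2.exp).const_mul 2)).sub_const φ₀
  have H' : HasDerivAt (morse α φ₀)
      ((-2*α) * Real.exp (-2 * α * (r - morseR0 α)) + (2*α) * Real.exp (-α * (r - morseR0 α))) r := by
    refine H.congr_deriv ?_
    ring
  exact H'.deriv

lemma morse_deriv2 (α φ₀ : ℝ) (x : ℝ) : deriv (deriv (morse α φ₀)) x =
    (4*α^2) * Real.exp (-2 * α * (x - morseR0 α)) - (2*α^2) * Real.exp (-α * (x - morseR0 α)) := by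
  rw [morse_deriv]
  have h1 : HasDerivAt (fun r : ℝ => -2 * α * (r - morseR0 α)) (-2*α) x := by
    simpa using ((hasDerivAt_id x).sub_const (morseR0 α)).const_mul (-2*α)
  have h2 : HasDerivAt (fun r : ℝ => -α * (r - morseR0 α)) (-α) x := by
    simpa using ((hasDerivAt_id x).sub_const (morseR0 α)).const_mul (-α)
  have H := (h1.exp.const_mul (-2*α)).add (h2.exp.const_mul (2*α))
  have H' : HasDerivAt (fun r => (-2*α) * Real.exp (-2 * α * (r - morseR0 α)) + (2*α) * Real.exp (-α * (r - morseR0 α)))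
      ((4*α^2) * Real.exp (-2 * α * (x - morseR0 α)) - (2*α^2) * Real.exp (-α * (x - morseR0 α))) x := by
    refine H.congr_deriv ?_
    ring
  exact H'.deriv

lemma morse_abc (φ₀ α : ℝ) (hα : 1 ≤ α) :
    0 < deriv (deriv (morse α φ₀)) 1 ∧ 0 < deriv (morse α φ₀) 2 ∧
    |deriv (deriv (morse α φ₀)) 2| ≤ 2 * Real.exp (-α) * deriv (deriv (morse α φ₀)) 1 := by
  have hα0 : 0 < α := by linarith
  set q : ℝ := Real.exp (-α) with hqdef
  have hq0 : 0 < q := Real.exp_pos _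
  have hqe : q ≤ Real.exp (-1) := Real.exp_le_exp.mpr (by linarith)
  have hq2 : 2 * q < 1 := by
    have h1 : Real.exp (-1) = (Real.exp 1)⁻¹ := by
      rw [Real.exp_neg]
    have h2 : (2.7182818283:ℝ) < Real.exp 1 := Real.exp_one_gt_d9
    have h3 : Real.exp (-1) < 1/2 := by
      rw [h1]
      rw [inv_lt_comm₀ (by linarith) (by norm_num)]
      norm_num
      linarith
    linarith
  set s : ℝ := Real.exp (-α * (1 - morseR0 α)) with hsdef
  have hs0 : 0 < s := Real.exp_pos _
  have hq2' : Real.exp (-2 * α) = q ^ 2 := by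
    rw [hqdef, sq, ← Real.exp_add]
    congr 1
    ring
  have hnum : (0:ℝ) < 1 + 2 * q := by linarith
  have hden : (0:ℝ) < 1 + 2 * q ^ 2 := by positivity
  have hsval : s = (1 + 2 * q) / (1 + 2 * q ^ 2) := by
    rw [hsdef, morseR0]
    rw [show -α * (1 - (1 + 1/α * Real.log ((1 + 2 * Real.exp (-α)) / (1 + 2 * Real.exp (-2*α)))))
        = α * (1/α) * Real.log ((1 + 2 * Real.exp (-α)) / (1 + 2 * Real.exp (-2*α))) by ring]
    rw [mul_one_div, div_self (ne_of_gt hα0), one_mul]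
    rw [hq2', ← hqdef]
    exact Real.exp_log (by positivity)
  have hs1 : 1 ≤ s := by
    rw [hsval, le_div_iff₀ hden]
    nlinarith
  have hs2 : s ≤ 2 := by
    rw [hsval, div_le_iff₀ hden]
    nlinarith
  have hsq1 : s * q < 1 := by nlinarith
  -- values of the exponentials
  have e1 : Real.exp (-2 * α * ((1:ℝ) - morseR0 α)) = s^2 := by
    rw [show -2 * α * ((1:ℝ) - morseR0 α) = (-α * (1 - morseR0 α)) + (-α * (1 - morseR0 α)) by ring,
      Real.exp_add, ← hsdef, sq]
  have e2 : Real.exp (-α * ((2:ℝ) - morseR0 α)) = s * q := by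
    rw [show -α * ((2:ℝ) - morseR0 α) = (-α * (1 - morseR0 α)) + (-α) by ring,
      Real.exp_add, ← hsdef, ← hqdef]
  have e3 : Real.exp (-2 * α * ((2:ℝ) - morseR0 α)) = (s*q)^2 := by
    rw [show -2 * α * ((2:ℝ) - morseR0 α) = (-α * (2 - morseR0 α)) + (-α * (2 - morseR0 α)) by ring,
      Real.exp_add, e2, sq]
  have ha : deriv (deriv (morse α φ₀)) 1 = 4*α^2*s^2 - 2*α^2*s := by
    rw [morse_deriv2, e1]
  have hb : deriv (deriv (morse α φ₀)) 2 = 4*α^2*(s*q)^2 - 2*α^2*(s*q) := by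
    rw [morse_deriv2, e3, e2]
  have hc : deriv (morse α φ₀) 2 = (-2*α)*(s*q)^2 + (2*α)*(s*q) := by
    rw [morse_deriv]
    dsimp only
    rw [e3, e2]
  have hα2 : 0 < α^2 := by positivity
  refine ⟨?_, ?_, ?_⟩
  · rw [ha]
    nlinarith [mul_pos hα2 hs0, mul_le_mul_of_nonneg_left hs1 (le_of_lt (mul_pos hα2 hs0))]
  · rw [hc]
    nlinarith [mul_pos (mul_pos hα0 (mul_pos hs0 hq0)) (sub_pos.mpr hsq1)]
  · rw [ha, hb, abs_le]
    have k1 : 0 ≤ α^2 * (s*q) * (4*s - 1 - 2*(s*q)) := by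
      apply mul_nonneg (mul_nonneg hα2.le (mul_nonneg hs0.le hq0.le))
      nlinarith
    have k2 : 0 ≤ α^2 * (s*q) * (2*(s*q) + 4*s - 3) := by
      apply mul_nonneg (mul_nonneg hα2.le (mul_nonneg hs0.le hq0.le))
      nlinarith [mul_nonneg hs0.le hq0.le]
    constructor <;> nlinarith [k1, k2]


lemma rpow_sub_le_of_le_one {x y p : ℝ} (hy : 0 ≤ y) (hyx : y ≤ x) (hx1 : x ≤ 1) (hp : 1 ≤ p) :
    x ^ p - y ^ p ≤ p * (x - y) := by
  have hx : 0 ≤ x := hy.trans hyx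
  rcases eq_or_lt_of_le hx with h0 | h0
  · have hy0 : y = 0 := le_antisymm (hyx.trans h0.symm.le) hy
    simp [← h0, hy0]
  · set s : ℝ := (x - y) / x with hs
    have hs0 : 0 ≤ s := div_nonneg (by linarith) h0.le
    have hs1 : s ≤ 1 := by
      rw [div_le_one h0]; linarith
    have hber : 1 + p * (-s) ≤ (1 + (-s)) ^ p :=
      one_add_mul_self_le_rpow_one_add (by linarith) hp
    have h1s : 1 + (-s) = y / x := by
      rw [hs]; field_simp; ring
    have hdiv : (y / x) ^ p = y ^ p / x ^ p := Real.div_rpow hy hx p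
    have hxp : 0 < x ^ p := Real.rpow_pos_of_pos h0 p
    have key : x ^ p - y ^ p ≤ x ^ p * (p * s) := by
      rw [h1s, hdiv] at hber
      have h2 : y ^ p / x ^ p * x ^ p = y ^ p := div_mul_cancel₀ _ (ne_of_gt hxp)
      nlinarith [hber, hxp, h2]
    have hxpx : x ^ p ≤ x := by
      calc x ^ p ≤ x ^ (1:ℝ) := Real.rpow_le_rpow_of_exponent_ge h0 hx1 hp
        _ = x := Real.rpow_one x
    have h2 : x ^ p * s ≤ x * s := mul_le_mul_of_nonneg_right hxpx hs0
    have h3 : x * s = x - y := by rw [hs]; field_simp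
    nlinarith [key, h2, h3, hp]

lemma abs_rpow_sub_rpow_le {x y p : ℝ} (hx0 : 0 ≤ x) (hx1 : x ≤ 1) (hy0 : 0 ≤ y) (hy1 : y ≤ 1)
    (hp : 1 ≤ p) : |x ^ p - y ^ p| ≤ p * |x - y| := by
  rcases le_total y x with h | h
  · rw [abs_of_nonneg (by nlinarith [Real.rpow_le_rpow hy0 h (by linarith : (0:ℝ) ≤ p)]),
      abs_of_nonneg (by linarith)]
    exact rpow_sub_le_of_le_one hy0 h hx1 hp
  · rw [abs_sub_comm, abs_sub_comm x y,
      abs_of_nonneg (by nlinarith [Real.rpow_le_rpow hx0 h (by linarith : (0:ℝ) ≤ p)]),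
      abs_of_nonneg (by linarith)]
    exact rpow_sub_le_of_le_one hx0 h hy1 hp


lemma rpow_one_div_sub_le {u v p m : ℝ} (hp : 1 ≤ p) (hm : 0 < m) (hm1 : m ≤ 1)
    (hv : m ≤ v) (hvu : v ≤ u) : u ^ (1/p) - v ^ (1/p) ≤ (u - v) / (p * m) := by
  have hp0 : 0 < p := lt_of_lt_of_le one_pos hp
  have hv0 : 0 < v := lt_of_lt_of_le hm hv
  have hu0 : 0 < u := lt_of_lt_of_le hv0 hvu
  set x := u ^ (1/p) with hxdef
  set y := v ^ (1/p) with hydef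
  have hy0 : 0 < y := Real.rpow_pos_of_pos hv0 _
  have hx0 : 0 < x := Real.rpow_pos_of_pos hu0 _
  have hyx : y ≤ x := Real.rpow_le_rpow hv0.le hvu (by positivity)
  have hcanc : (1/p) * p = 1 := by field_simp
  have hyp : y ^ p = v := by
    rw [hydef, ← Real.rpow_mul hv0.le, hcanc, Real.rpow_one]
  have hxp : x ^ p = u := by
    rw [hxdef, ← Real.rpow_mul hu0.le, hcanc, Real.rpow_one]
  -- Bernoulli with s = (x-y)/y
  set s : ℝ := (x - y) / y with hs
  have hs0 : 0 ≤ s := div_nonneg (by linarith) hy0.le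
  have hber : 1 + p * s ≤ (1 + s) ^ p :=
    one_add_mul_self_le_rpow_one_add (by linarith) hp
  have h1s : 1 + s = x / y := by rw [hs]; field_simp; ring
  have hdiv : (x / y) ^ p = u / v := by
    rw [Real.div_rpow hx0.le hy0.le, hyp, hxp]
  rw [h1s, hdiv] at hber
  -- u - v ≥ p * v * s
  have key : p * (v * s) ≤ u - v := by
    have := (mul_le_mul_of_nonneg_right hber hv0.le)
    rw [div_mul_cancel₀ _ (ne_of_gt hv0)] at this
    nlinarith
  -- v * s = (v / y) * (x - y)  and  v / y ≥ m
  have hvy : m ≤ v / y := by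
    rcases le_total y 1 with h1 | h1
    · calc m ≤ v := hv
        _ ≤ v / y := by
          rw [le_div_iff₀ hy0]; nlinarith
    · have hyp1 : y ^ (p - 1) = v / y := by
        rw [Real.rpow_sub hy0, hyp, Real.rpow_one]
      rw [← hyp1]
      exact hm1.trans (Real.one_le_rpow h1 (by linarith))
  have hvs : v * s = (v / y) * (x - y) := by
    rw [hs]; field_simp
  have : p * m * (x - y) ≤ u - v := by
    rw [hvs] at key
    nlinarith [mul_le_mul_of_nonneg_right hvy (sub_nonneg.mpr hyx), hp0]
  have hpm : 0 < p * m := by positivity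
  rw [le_div_iff₀ hpm]
  linarith

lemma abs_rpow_one_div_sub {u v p m : ℝ} (hp : 1 ≤ p) (hm : 0 < m) (hm1 : m ≤ 1)
    (hu : m ≤ u) (hv : m ≤ v) : |u ^ (1/p) - v ^ (1/p)| ≤ |u - v| / (p * m) := by
  rcases le_total v u with h | h
  · rw [abs_of_nonneg (sub_nonneg.mpr (Real.rpow_le_rpow (by linarith) h (by positivity))),
      abs_of_nonneg (by linarith)]
    exact rpow_one_div_sub_le hp hm hm1 hv h
  · rw [abs_sub_comm, abs_sub_comm u v,
      abs_of_nonneg (sub_nonneg.mpr (Real.rpow_le_rpow (by linarith) h (by positivity))),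
      abs_of_nonneg (by linarith)]
    exact rpow_one_div_sub_le hp hm hm1 hu h

lemma aux_e {p q H : ℝ} (hp : 1 ≤ p) (hq : 0 ≤ q) (hH : 2 ≤ H) :
    8*q*H ≤ 8*p*q*H ∧ 8*q ≤ 8*p*q*H := by
  have f1 : 0 ≤ (p - 1) * (q * H) := mul_nonneg (by linarith) (mul_nonneg hq (by linarith))
  have f2 : 0 ≤ q * (H - 2) := mul_nonneg hq (by linarith)
  constructor <;> nlinarith [f1, f2]

lemma S_est (h₀ : ℕ) (hh : 2 ≤ h₀) (p q t lam : ℝ) (hp : 1 ≤ p) (hq : 0 < q)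
    (hq1 : q * 100 ≤ 1) (hqh : q * (32 * h₀) ≤ 1) (ht : |t - 1/(h₀:ℝ)| ≤ 12*q)
    (hl0 : 0 < lam) (hl1 : lam < 1) (hlam8 : lam ≤ 8*q) :
    |((1 - lam ^ p) * ∑ ℓ ∈ Finset.range h₀, |t - lam ^ ℓ| ^ p + (lam ^ p) ^ h₀) ^ (1/p)
      - (|1 - 1/(h₀:ℝ)| ^ p + ((h₀:ℝ) - 1) * (1/(h₀:ℝ)) ^ p) ^ (1/p)|
      ≤ (80 * (h₀:ℝ) * 3 ^ p) * q := by
  have hp0 : 0 < p := lt_of_lt_of_le one_pos hp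
  have hH : (2:ℝ) ≤ (h₀:ℝ) := by exact_mod_cast hh
  have hH0 : (0:ℝ) < (h₀:ℝ) := by linarith
  have htl := (abs_le.1 ht).1
  have htu := (abs_le.1 ht).2
  have hh2 : 1/(h₀:ℝ) ≤ 1/2 := by rw [div_le_div_iff₀ hH0 two_pos]; linarith
  have hh0 : 0 < 1/(h₀:ℝ) := by positivity
  have h1h : 12 * q ≤ 1/(h₀:ℝ) := by
    rw [le_div_iff₀ hH0]; linarith
  have ht0 : 0 ≤ t := by linarith
  have ht1 : t ≤ 1 := by linarith
  have h13 : 1/3 ≤ 1 - t := by linarith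
  set r : ℝ := lam ^ p with hrdef
  have hr0 : 0 < r := Real.rpow_pos_of_pos hl0 p
  have hr1 : r < 1 := Real.rpow_lt_one hl0.le hl1 hp0
  have hrlam : r ≤ lam := by
    calc r = lam ^ p := hrdef
      _ ≤ lam ^ (1:ℝ) := Real.rpow_le_rpow_of_exponent_ge hl0 hl1.le hp
      _ = lam := Real.rpow_one lam
  have hr8 : r ≤ 8*q := le_trans hrlam hlam8
  have hrh8 : r ^ h₀ ≤ 8*q := le_trans (pow_le_of_le_one hr0.le hr1.le (by omega)) hr8
  have hrh0 : 0 ≤ r ^ h₀ := by positivity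
  set A : ℝ := |1 - 1/(h₀:ℝ)| ^ p with hAdef
  set B : ℝ := (1/(h₀:ℝ)) ^ p with hBdef
  set Cp : ℝ := A + ((h₀:ℝ) - 1) * B with hCpdef
  have hA : A = (1 - 1/(h₀:ℝ)) ^ p := by rw [hAdef, abs_of_nonneg (by linarith)]
  -- termwise bounds
  have hterm0 : abs (|t - 1| ^ p - A) ≤ 12 * p * q := by
    rw [hA, show |t - 1| = 1 - t by rw [abs_sub_comm, abs_of_nonneg (by linarith)]]
    calc |(1-t)^p - (1-1/(h₀:ℝ))^p| ≤ p * |(1-t) - (1-1/(h₀:ℝ))| :=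
        abs_rpow_sub_rpow_le (by linarith) (by linarith) (by linarith) (by linarith) hp
      _ ≤ 12 * p * q := by
          rw [show (1-t) - (1-1/(h₀:ℝ)) = -(t - 1/(h₀:ℝ)) by ring, abs_neg]
          nlinarith [abs_nonneg (t - 1/(h₀:ℝ))]
  have htermℓ : ∀ ℓ : ℕ, 1 ≤ ℓ → abs (|t - lam ^ ℓ| ^ p - B) ≤ 20 * p * q := by
    intro ℓ hℓ
    have hpl : lam ^ ℓ ≤ lam := by
      calc lam ^ ℓ ≤ lam ^ 1 := pow_le_pow_of_le_one hl0.le hl1.le hℓ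
        _ = lam := pow_one lam
    have hpl0 : 0 < lam ^ ℓ := pow_pos hl0 ℓ
    have hx1 : |t - lam ^ ℓ| ≤ 1 := by
      rw [abs_le]; constructor <;> nlinarith
    have hxy : abs (|t - lam ^ ℓ| - 1/(h₀:ℝ)) ≤ 20 * q := by
      rcases abs_cases (t - lam ^ ℓ) with ⟨he, _⟩ | ⟨he, _⟩ <;>
        (rw [abs_le]; constructor <;> nlinarith)
    calc abs (|t - lam ^ ℓ| ^ p - B) ≤ p * abs (|t - lam ^ ℓ| - 1/(h₀:ℝ)) :=
        abs_rpow_sub_rpow_le (abs_nonneg _) hx1 (by linarith) (by linarith) hp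
      _ ≤ p * (20 * q) := by nlinarith
      _ = 20 * p * q := by ring
  -- sum bound
  set Sig : ℝ := ∑ ℓ ∈ Finset.range h₀, |t - lam ^ ℓ| ^ p with hSigdef
  obtain ⟨m, hm⟩ : ∃ m, h₀ = m + 1 := ⟨h₀ - 1, by omega⟩
  have hmR : ((m:ℝ)) = (h₀:ℝ) - 1 := by rw [hm]; push_cast; ring
  have hSig_split : Sig = (∑ ℓ ∈ Finset.range m, |t - lam ^ (ℓ+1)| ^ p) + |t - 1| ^ p := by
    rw [hSigdef, hm, Finset.sum_range_succ']
    simp [pow_zero]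
  have hsum_mid : |(∑ ℓ ∈ Finset.range m, |t - lam ^ (ℓ+1)| ^ p) - (m:ℝ) * B| ≤ (m:ℝ) * (20*p*q) := by
    rw [show (m:ℝ) * B = ∑ _ℓ ∈ Finset.range m, B by rw [Finset.sum_const]; simp [mul_comm], ← Finset.sum_sub_distrib]
    calc abs (∑ ℓ ∈ Finset.range m, (|t - lam ^ (ℓ+1)| ^ p - B))
        ≤ ∑ ℓ ∈ Finset.range m, abs (|t - lam ^ (ℓ+1)| ^ p - B) := Finset.abs_sum_le_sum_abs _ _
      _ ≤ ∑ _ℓ ∈ Finset.range m, (20*p*q) := by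
          apply Finset.sum_le_sum
          intro ℓ _
          exact htermℓ (ℓ+1) (by omega)
      _ = (m:ℝ) * (20*p*q) := by rw [Finset.sum_const]; simp [mul_comm]
  have hSigCp : |Sig - Cp| ≤ 20 * p * (h₀:ℝ) * q := by
    have h1 := abs_le.1 hterm0
    have h2 := abs_le.1 hsum_mid
    rw [hSig_split, hCpdef, ← hmR, abs_le]
    have hm1 : (1:ℝ) ≤ (m:ℝ) + 1 := by
      have := Nat.cast_nonneg (α := ℝ) m
      linarith
    have hmh : (m:ℝ) + 1 = (h₀:ℝ) := by rw [hmR]; ring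
    constructor <;> nlinarith [mul_nonneg (mul_nonneg hp0.le hq.le) (Nat.cast_nonneg m)]
  have hSigub : Sig ≤ (h₀:ℝ) := by
    have hone : ∀ ℓ ∈ Finset.range h₀, |t - lam ^ ℓ| ^ p ≤ (1:ℝ) := by
      intro ℓ _
      have hpl0 : 0 < lam ^ ℓ := pow_pos hl0 ℓ
      have hpl1 : lam ^ ℓ ≤ 1 := pow_le_one₀ hl0.le hl1.le
      refine Real.rpow_le_one (abs_nonneg _) ?_ hp0.le
      rw [abs_le]
      constructor <;> nlinarith
    calc Sig ≤ ∑ _ℓ ∈ Finset.range h₀, (1:ℝ) := Finset.sum_le_sum hone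
      _ = (h₀:ℝ) := by simp
  have hSiglb : (1/3:ℝ) ^ p ≤ Sig := by
    have h0mem : 0 ∈ Finset.range h₀ := Finset.mem_range.mpr (by omega)
    calc (1/3:ℝ) ^ p ≤ (1 - t) ^ p := Real.rpow_le_rpow (by norm_num) h13 hp0.le
      _ = |t - 1| ^ p := by rw [show |t - 1| = 1 - t by rw [abs_sub_comm, abs_of_nonneg (by linarith)]]
      _ = |t - lam ^ 0| ^ p := by norm_num
      _ ≤ Sig := Finset.single_le_sum (f := fun ℓ => |t - lam ^ ℓ| ^ p)
          (fun ℓ _ => Real.rpow_nonneg (abs_nonneg _) p) h0mem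
  have hSig0 : 0 ≤ Sig := le_trans (by positivity) hSiglb
  set S : ℝ := (1 - r) * Sig + r ^ h₀ with hSdef
  have hSCp : |S - Cp| ≤ 36 * p * (h₀:ℝ) * q := by
    have h1 := abs_le.1 hSigCp
    have hrS1 : r * Sig ≤ 8*q*(h₀:ℝ) := mul_le_mul hr8 hSigub hSig0 (by linarith)
    have hrS0 : 0 ≤ r * Sig := mul_nonneg hr0.le hSig0
    have hqh0 : 0 ≤ q * (h₀:ℝ) := mul_nonneg hq.le hH0.le
    obtain ⟨e1, e2⟩ := aux_e hp hq.le hH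
    rw [hSdef, abs_le]
    constructor <;> linarith
  set μ : ℝ := (1/2) * (1/3:ℝ) ^ p with hμdef
  have h3p : (0:ℝ) < (1/3:ℝ) ^ p := Real.rpow_pos_of_pos (by norm_num) p
  have hμ0 : 0 < μ := by rw [hμdef]; positivity
  have hμ1 : μ ≤ 1 := by
    have : (1/3:ℝ) ^ p ≤ 1 := Real.rpow_le_one (by norm_num) (by norm_num) hp0.le
    rw [hμdef]; linarith
  have hSμ : μ ≤ S := by
    have g1 : (1/2:ℝ) ≤ 1 - r := by linarith
    have g2 : (1/2) * (1/3:ℝ) ^ p ≤ (1 - r) * Sig :=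
      mul_le_mul g1 hSiglb h3p.le (by linarith)
    rw [hSdef, hμdef]
    linarith
  have hCpμ : μ ≤ Cp := by
    have hA2 : (1/3:ℝ) ^ p ≤ A := by
      rw [hA]
      exact Real.rpow_le_rpow (by norm_num) (by linarith) hp0.le
    have hB0 : 0 ≤ ((h₀:ℝ) - 1) * B := by
      apply mul_nonneg (by linarith)
      exact Real.rpow_nonneg (by positivity) p
    rw [hCpdef, hμdef]; linarith
  have hmain : |S ^ (1/p) - Cp ^ (1/p)| ≤ |S - Cp| / (p * μ) :=
    abs_rpow_one_div_sub hp hμ0 hμ1 hSμ hCpμ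
  have hinv : (1/3:ℝ) ^ p * 3 ^ p = 1 := by
    rw [← Real.mul_rpow (by norm_num) (by norm_num)]
    norm_num
  have hpμ : 0 < p * μ := by positivity
  calc |S ^ (1/p) - Cp ^ (1/p)| ≤ |S - Cp| / (p * μ) := hmain
    _ ≤ (36 * p * (h₀:ℝ) * q) / (p * μ) := by gcongr
    _ = 72 * (h₀:ℝ) * 3 ^ p * q := by
        rw [div_eq_iff (ne_of_gt hpμ), hμdef]
        linear_combination (-36*p*(h₀:ℝ)*q) * hinv
    _ ≤ (80 * (h₀:ℝ) * 3 ^ p) * q := by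
        have h30 : (0:ℝ) ≤ (h₀:ℝ) * 3 ^ p * q := by positivity
        linarith


lemma ratio_eq (h₀ : ℕ) (p : ℝ) (hp : 1 ≤ p) (K t lam : ℝ)
    (hK : 0 < K) (hl0 : 0 < lam) (hl1 : lam < 1) :
    (∑' ℓ : ℕ, |(if ℓ < h₀ then K * t else 0) - K * lam ^ ℓ| ^ p) ^ (1/p) /
      (∑' ℓ : ℕ, |K * lam ^ ℓ| ^ p) ^ (1/p)
    = ((1 - lam ^ p) * ∑ ℓ ∈ Finset.range h₀, |t - lam ^ ℓ| ^ p + (lam ^ p) ^ h₀) ^ (1/p) := by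
  have hp0 : 0 < p := lt_of_lt_of_le one_pos hp
  set r : ℝ := lam ^ p with hrdef
  have hr0 : 0 < r := Real.rpow_pos_of_pos hl0 p
  have hr1 : r < 1 := Real.rpow_lt_one hl0.le hl1 hp0
  have hpow : ∀ ℓ : ℕ, (lam ^ ℓ : ℝ) ^ p = r ^ ℓ := by
    intro ℓ
    rw [← Real.rpow_natCast lam ℓ, ← Real.rpow_mul hl0.le, mul_comm ((ℓ:ℕ):ℝ) p,
      Real.rpow_mul hl0.le, Real.rpow_natCast]
  have habs_ua : ∀ ℓ : ℕ, |K * lam ^ ℓ| ^ p = K ^ p * r ^ ℓ := by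
    intro ℓ
    rw [abs_of_pos (by positivity), Real.mul_rpow hK.le (pow_nonneg hl0.le _), hpow]
  have hden : (∑' ℓ : ℕ, |K * lam ^ ℓ| ^ p) = K ^ p * (1 - r)⁻¹ := by
    rw [tsum_congr habs_ua, tsum_mul_left, tsum_geometric_of_lt_one hr0.le hr1]
  set f : ℕ → ℝ := fun ℓ => |(if ℓ < h₀ then K * t else 0) - K * lam ^ ℓ| ^ p with hfdef
  have htail : ∀ n : ℕ, f (n + h₀) = (K ^ p * r ^ h₀) * r ^ n := by
    intro n
    have : ¬ (n + h₀ < h₀) := by omega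
    simp only [hfdef, this, if_neg, ite_false, zero_sub, abs_neg]
    rw [habs_ua, pow_add]
    ring
  have hsummable : Summable f := by
    rw [← summable_nat_add_iff h₀]
    exact Summable.congr ((summable_geometric_of_lt_one hr0.le hr1).mul_left (K ^ p * r ^ h₀))
      (fun n => (htail n).symm)
  set Sig : ℝ := ∑ ℓ ∈ Finset.range h₀, |t - lam ^ ℓ| ^ p with hSdef
  have hSig0 : 0 ≤ Sig := Finset.sum_nonneg fun ℓ _ => Real.rpow_nonneg (abs_nonneg _) p
  have hsum : ∑ ℓ ∈ Finset.range h₀, f ℓ = K ^ p * Sig := by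
    rw [hSdef, Finset.mul_sum]
    apply Finset.sum_congr rfl
    intro ℓ hℓ
    have hℓ' : ℓ < h₀ := Finset.mem_range.mp hℓ
    simp only [hfdef, hℓ', if_pos, ite_true]
    rw [← mul_sub, abs_mul, abs_of_pos hK,
      Real.mul_rpow hK.le (abs_nonneg _)]
  have hnum : (∑' ℓ : ℕ, f ℓ) = K ^ p * (Sig + r ^ h₀ * (1 - r)⁻¹) := by
    rw [← hsummable.sum_add_tsum_nat_add h₀, hsum, tsum_congr htail, tsum_mul_left,
      tsum_geometric_of_lt_one hr0.le hr1]
    ring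
  have hden0 : 0 < K ^ p * (1 - r)⁻¹ := by
    apply mul_pos (Real.rpow_pos_of_pos hK p)
    exact inv_pos.mpr (by linarith)
  have hS0 : 0 ≤ (1 - r) * Sig + r ^ h₀ :=
    add_nonneg (mul_nonneg (by linarith) hSig0) (pow_nonneg hr0.le _)
  have hkey : K ^ p * (Sig + r ^ h₀ * (1 - r)⁻¹)
      = (K ^ p * (1 - r)⁻¹) * ((1 - r) * Sig + r ^ h₀) := by
    have h1r : (1:ℝ) - r ≠ 0 := by linarith
    field_simp
  rw [hnum, hden, hkey, Real.mul_rpow hden0.le hS0,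
    mul_div_cancel_left₀ _ (ne_of_gt (Real.rpow_pos_of_pos hden0 _))]


lemma sup_part (h₀ : ℕ) (hh : 2 ≤ h₀) (q K t lam : ℝ) (hq : 0 < q) (hq1 : q * 100 ≤ 1)
    (hqh : q * (32 * h₀) ≤ 1) (hK : 0 < K) (ht : |t - 1/(h₀:ℝ)| ≤ 12*q)
    (hl0 : 0 < lam) (hl1 : lam < 1) (hlam8 : lam ≤ 8*q) :
    |(⨆ ℓ : ℕ, |(if ℓ < h₀ then K * t else 0) - K * lam ^ ℓ|) / (⨆ ℓ : ℕ, |K * lam ^ ℓ|)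
      - max (1 - 1/(h₀:ℝ)) (1/(h₀:ℝ))| ≤ 24 * q := by
  have hH : (2:ℝ) ≤ (h₀:ℝ) := by exact_mod_cast hh
  have hH0 : (0:ℝ) < (h₀:ℝ) := by linarith
  have htl := (abs_le.1 ht).1
  have htu := (abs_le.1 ht).2
  have hqi : 24 * q * (h₀:ℝ) ≤ 1 := by nlinarith
  have hh2 : 1/(h₀:ℝ) ≤ 1/2 := by
    rw [div_le_div_iff₀ hH0 two_pos]; linarith
  have hh0 : 0 < 1/(h₀:ℝ) := by positivity
  have ht1 : t ≤ 1 := by linarith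
  have h1h : 12 * q ≤ 1/(h₀:ℝ) := by rw [le_div_iff₀ hH0]; linarith
  have ht0 : 0 ≤ t := by linarith
  set M : ℝ := max (1 - 1/(h₀:ℝ)) (1/(h₀:ℝ)) with hM
  have hM2 : 1/2 ≤ M := le_trans (by linarith) (le_max_left _ _)
  have hpow1 : ∀ ℓ : ℕ, 1 ≤ ℓ → lam ^ ℓ ≤ lam := by
    intro ℓ hℓ
    calc lam ^ ℓ ≤ lam ^ 1 := pow_le_pow_of_le_one hl0.le hl1.le hℓ
      _ = lam := pow_one lam
  have hpownn : ∀ ℓ : ℕ, (0:ℝ) < lam ^ ℓ := fun ℓ => pow_pos hl0 ℓ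
  have hpowle1 : ∀ ℓ : ℕ, lam ^ ℓ ≤ 1 := fun ℓ => pow_le_one₀ hl0.le hl1.le
  -- denominator sup
  have hbddua : BddAbove (Set.range fun ℓ : ℕ => |K * lam ^ ℓ|) := by
    refine ⟨K, ?_⟩
    rintro x ⟨ℓ, rfl⟩
    show |K * lam ^ ℓ| ≤ K
    rw [abs_of_pos (by positivity)]
    nlinarith [hpowle1 ℓ, hpownn ℓ]
  have hsupua : (⨆ ℓ : ℕ, |K * lam ^ ℓ|) = K := by
    apply le_antisymm
    · apply ciSup_le
      intro ℓ
      rw [abs_of_pos (by positivity)]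
      nlinarith [hpowle1 ℓ, hpownn ℓ]
    · have := le_ciSup hbddua 0
      simpa [abs_of_pos hK] using this
  set w : ℕ → ℝ := fun ℓ => |(if ℓ < h₀ then K * t else 0) - K * lam ^ ℓ| with hw
  have hub : ∀ ℓ, w ℓ ≤ K * (M + 24*q) := by
    intro ℓ
    have hMq : 0 ≤ M + 24*q := by nlinarith
    by_cases hℓ : ℓ < h₀
    · simp only [hw, hℓ, if_pos, ite_true]
      rw [← mul_sub, abs_mul, abs_of_pos hK]
      apply mul_le_mul_of_nonneg_left _ hK.le
      rcases Nat.eq_zero_or_pos ℓ with h0 | h1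
      · subst h0
        rw [pow_zero, abs_of_nonpos (by linarith)]
        have : M ≥ 1 - 1/(h₀:ℝ) := le_max_left _ _
        nlinarith
      · have h2 := hpow1 ℓ h1
        have : M ≥ 1/(h₀:ℝ) := le_max_right _ _
        rw [abs_le]
        constructor <;> nlinarith [hpownn ℓ]
    · simp only [hw, hℓ, if_neg, ite_false]
      rw [zero_sub, abs_neg, abs_of_pos (by positivity)]
      have h1 : 1 ≤ ℓ := by omega
      have h2 := hpow1 ℓ h1
      nlinarith [hpownn ℓ]
  have hwbdd : BddAbove (Set.range w) := by
    refine ⟨K * (M + 24*q), ?_⟩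
    rintro x ⟨ℓ, rfl⟩
    exact hub ℓ
  have hup : (⨆ ℓ, w ℓ) ≤ K * (M + 24*q) := ciSup_le hub
  have hw0 : w 0 = K * (1 - t) := by
    simp only [hw, Nat.pos_of_ne_zero, if_pos (by omega : 0 < h₀), pow_zero, mul_one]
    rw [show K * t - K = K * (t - 1) by ring, abs_mul, abs_of_pos hK, abs_of_nonpos (by linarith)]
    ring
  have hw1 : K * (t - lam) ≤ w 1 := by
    simp only [hw, if_pos (by omega : 1 < h₀), pow_one]
    rw [← mul_sub, abs_mul, abs_of_pos hK]
    exact mul_le_mul_of_nonneg_left (le_abs_self _) hK.le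
  have hlow : K * (M - 24*q) ≤ ⨆ ℓ, w ℓ := by
    rcases max_cases (1 - 1/(h₀:ℝ)) (1/(h₀:ℝ)) with ⟨hMeq, _⟩ | ⟨hMeq, _⟩
    · calc K * (M - 24*q) ≤ K * (1 - t) := by
            rw [hM, hMeq]; apply mul_le_mul_of_nonneg_left _ hK.le; linarith
        _ = w 0 := hw0.symm
        _ ≤ ⨆ ℓ, w ℓ := le_ciSup hwbdd 0
    · calc K * (M - 24*q) ≤ K * (t - lam) := by
            rw [hM, hMeq]; apply mul_le_mul_of_nonneg_left _ hK.le; linarith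
        _ ≤ w 1 := hw1
        _ ≤ ⨆ ℓ, w ℓ := le_ciSup hwbdd 1
  rw [hsupua, abs_le]
  have hle : iSup w / K ≤ M + 24*q := by
    rw [div_le_iff₀ hK]; nlinarith [hup]
  have hge : M - 24*q ≤ iSup w / K := by
    rw [le_div_iff₀ hK]; nlinarith [hlow]
  exact ⟨by linarith, by linarith⟩


section
variable {h₀ : ℕ} {p q a b c lam : ℝ}

lemma core_bounds (hh : 2 ≤ h₀) (hq : 0 < q) (hq1 : q * 100 ≤ 1) (hqh : q * (32 * h₀) ≤ 1)
    (ha : 0 < a) (hc : 0 < c) (hb : |b| ≤ 2 * q * a)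
    (hl0 : 0 < lam) (hl1 : lam < 1)
    (heq : b * lam ^ 2 + (a + 2 * b) * lam + b = 0) :
    lam ≤ 8 * q ∧ a / 2 ≤ a + b * (1 + lam) ∧ a + b * (1 + lam) ≤ 2 * a ∧
      (h₀ : ℝ) * a / 2 ≤ (h₀ : ℝ) * a + (4 * (h₀ : ℝ) - 2) * b ∧
      |(a + b * (1 + lam)) / ((h₀ : ℝ) * a + (4 * (h₀ : ℝ) - 2) * b) - 1 / (h₀ : ℝ)| ≤ 12 * q := by
  have hH : (2:ℝ) ≤ (h₀:ℝ) := by exact_mod_cast hh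
  have hH0 : (0:ℝ) < (h₀:ℝ) := by linarith
  have habs := abs_le.1 hb
  have hqa100 : q * a ≤ a / 100 := by nlinarith [mul_le_mul_of_nonneg_right hq1 ha.le]
  have hqha : q * (32 * (h₀:ℝ)) * a ≤ a := by nlinarith [mul_le_mul_of_nonneg_right hqh ha.le]
  have hbl1 : 0 ≤ (2*q*a - b) * (1 - lam) :=
    mul_nonneg (by linarith [habs.2]) (by linarith)
  have hbl2 : 0 ≤ (b + 2*q*a) * (1 - lam) :=
    mul_nonneg (by linarith [habs.1]) (by linarith)
  have hlam8 : lam ≤ 8 * q := by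
    have h1 : (a + 2*b) * lam = -b * (1 + lam^2) := by linear_combination heq
    have h2 : (a + 2*b) * lam ≤ 4*(q*a) := by
      have := mul_le_mul_of_nonneg_right (show -b ≤ 2*(q*a) by linarith [habs.1])
        (show (0:ℝ) ≤ 1 + lam^2 by positivity)
      nlinarith [sq_nonneg lam, mul_pos hq ha]
    have h3 : a/2 ≤ a + 2*b := by nlinarith [habs.1]
    by_contra hcon
    push_neg at hcon
    have h4 : (a/2) * (8*q) < (a + 2*b) * lam := by
      have : (a/2) * (8*q) < (a/2) * lam := by
        apply mul_lt_mul_of_pos_left hcon (by linarith)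
      nlinarith [mul_le_mul_of_nonneg_right h3 (le_of_lt (lt_trans (by positivity) hcon))]
    nlinarith
  have hD1 : a / 2 ≤ a + b * (1 + lam) := by nlinarith [habs.1]
  have hD2 : a + b * (1 + lam) ≤ 2 * a := by nlinarith [habs.2]
  have hE1 : (h₀ : ℝ) * a / 2 ≤ (h₀ : ℝ) * a + (4 * (h₀ : ℝ) - 2) * b := by
    have h5 : (4 * (h₀:ℝ) - 2) * (-(2*q*a)) ≤ (4 * (h₀:ℝ) - 2) * b :=
      mul_le_mul_of_nonneg_left (by linarith [habs.1]) (by linarith)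
    nlinarith
  refine ⟨hlam8, hD1, hD2, hE1, ?_⟩
  set D := a + b * (1 + lam) with hD
  set E := (h₀ : ℝ) * a + (4 * (h₀ : ℝ) - 2) * b with hE
  have hE0 : 0 < E := lt_of_lt_of_le (by positivity) hE1
  have hD0 : 0 < D := lt_of_lt_of_le (by positivity) hD1
  have hsub : D / E - 1 / (h₀:ℝ) = ((h₀:ℝ) * D - E) / ((h₀:ℝ) * E) := by
    field_simp
  have hnum : |(h₀:ℝ) * D - E| ≤ 12 * (h₀:ℝ) * (q * a) := by
    have h3 : (h₀:ℝ) * D - E = b * ((h₀:ℝ) * (1 + lam) - (4 * (h₀:ℝ) - 2)) := by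
      rw [hD, hE]; ring
    rw [h3, abs_mul]
    have h4 : |(h₀:ℝ) * (1 + lam) - (4 * (h₀:ℝ) - 2)| ≤ 6 * (h₀:ℝ) := by
      rw [abs_le]; constructor <;> nlinarith
    calc |b| * |(h₀:ℝ) * (1 + lam) - (4 * (h₀:ℝ) - 2)| ≤ (2*q*a) * (6 * (h₀:ℝ)) :=
          mul_le_mul hb h4 (abs_nonneg _) (by positivity)
      _ = 12 * (h₀:ℝ) * (q * a) := by ring
  rw [hsub, abs_div, abs_of_pos (by positivity : (0:ℝ) < (h₀:ℝ) * E)]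
  rw [div_le_iff₀ (by positivity)]
  have h6 : (h₀:ℝ) * ((h₀:ℝ) * a / 2) ≤ (h₀:ℝ) * E := by
    exact mul_le_mul_of_nonneg_left hE1 hH0.le
  calc |(h₀:ℝ) * D - E| ≤ 12 * (h₀:ℝ) * (q * a) := hnum
    _ ≤ 12 * q * ((h₀:ℝ) * E) := by
        nlinarith [mul_le_mul_of_nonneg_left hE1 (show (0:ℝ) ≤ 12*q*(h₀:ℝ) by positivity),
          mul_nonneg (mul_nonneg (mul_nonneg hq.le ha.le) hH0.le) (show (0:ℝ) ≤ (h₀:ℝ) - 2 by linarith)]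

end

section
variable {h₀ : ℕ} {p q a b c lam : ℝ}

lemma core (hh : 2 ≤ h₀) (hp : 1 ≤ p) (hq : 0 < q) (hq1 : q * 100 ≤ 1)
    (hqh : q * (32 * h₀) ≤ 1) (ha : 0 < a) (hc : 0 < c) (hb : |b| ≤ 2 * q * a)
    (hl0 : 0 < lam) (hl1 : lam < 1)
    (heq : b * lam ^ 2 + (a + 2 * b) * lam + b = 0) :
    abs ((∑' ℓ : ℕ, |(if ℓ < h₀ then c / ((h₀ : ℝ) * a + (4 * (h₀ : ℝ) - 2) * b) else 0)
            - c * lam ^ ℓ / (a + b * (1 + lam))| ^ p) ^ (1 / p) /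
          (∑' ℓ : ℕ, |c * lam ^ ℓ / (a + b * (1 + lam))| ^ p) ^ (1 / p)
        - (|1 - 1 / (h₀ : ℝ)| ^ p + ((h₀ : ℝ) - 1) * (1 / (h₀ : ℝ)) ^ p) ^ (1 / p))
      ≤ (80 * (h₀:ℝ) * 3 ^ p + 24) * q ∧
    abs ((⨆ ℓ : ℕ, |(if ℓ < h₀ then c / ((h₀ : ℝ) * a + (4 * (h₀ : ℝ) - 2) * b) else 0)
            - c * lam ^ ℓ / (a + b * (1 + lam))|) /
          (⨆ ℓ : ℕ, |c * lam ^ ℓ / (a + b * (1 + lam))|)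
        - max (1 - 1 / (h₀ : ℝ)) (1 / (h₀ : ℝ))) ≤ (80 * (h₀:ℝ) * 3 ^ p + 24) * q := by
  obtain ⟨hlam8, hD1, hD2, hE1, ht⟩ :=
    core_bounds hh hq hq1 hqh ha hc hb hl0 hl1 heq
  have hH0 : (0:ℝ) < (h₀:ℝ) := by
    have : (2:ℝ) ≤ (h₀:ℝ) := by exact_mod_cast hh
    linarith
  set D : ℝ := a + b * (1 + lam) with hDdef
  set E : ℝ := (h₀ : ℝ) * a + (4 * (h₀ : ℝ) - 2) * b with hEdef
  have hD0 : 0 < D := lt_of_lt_of_le (by positivity) hD1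
  have hE0 : 0 < E := lt_of_lt_of_le (by positivity) hE1
  set K : ℝ := c / D with hKdef
  set t : ℝ := D / E with htdef
  have hK : 0 < K := div_pos hc hD0
  have hfun1 : ∀ ℓ : ℕ, (if ℓ < h₀ then c / E else 0) - c * lam ^ ℓ / D
      = (if ℓ < h₀ then K * t else 0) - K * lam ^ ℓ := by
    intro ℓ
    have h1 : c * lam ^ ℓ / D = K * lam ^ ℓ := mul_div_right_comm c (lam ^ ℓ) D
    have h2 : c / E = K * t := by
      rw [hKdef, htdef]
      field_simp
    rw [h1, h2]
  have hpos3 : (0:ℝ) ≤ 80 * (h₀:ℝ) * 3 ^ p * q := by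
    have := Real.rpow_nonneg (show (0:ℝ) ≤ 3 by norm_num) p
    positivity
  constructor
  · have hre1 : (∑' ℓ : ℕ, |(if ℓ < h₀ then c / E else 0) - c * lam ^ ℓ / D| ^ p)
        = ∑' ℓ : ℕ, |(if ℓ < h₀ then K * t else 0) - K * lam ^ ℓ| ^ p :=
      tsum_congr fun ℓ => by rw [hfun1 ℓ]
    have hre2 : (∑' ℓ : ℕ, |c * lam ^ ℓ / D| ^ p) = ∑' ℓ : ℕ, |K * lam ^ ℓ| ^ p :=
      tsum_congr fun ℓ => by rw [mul_div_right_comm c (lam ^ ℓ) D]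
    rw [hre1, hre2, ratio_eq h₀ p hp K t lam hK hl0 hl1]
    calc abs (((1 - lam ^ p) * ∑ ℓ ∈ Finset.range h₀, |t - lam ^ ℓ| ^ p + (lam ^ p) ^ h₀) ^ (1/p)
          - (|1 - 1/(h₀:ℝ)| ^ p + ((h₀:ℝ) - 1) * (1/(h₀:ℝ)) ^ p) ^ (1/p))
        ≤ (80 * (h₀:ℝ) * 3 ^ p) * q :=
          S_est h₀ hh p q t lam hp hq hq1 hqh ht hl0 hl1 hlam8
      _ ≤ (80 * (h₀:ℝ) * 3 ^ p + 24) * q := by linarith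
  · have hre1 : (⨆ ℓ : ℕ, |(if ℓ < h₀ then c / E else 0) - c * lam ^ ℓ / D|)
        = ⨆ ℓ : ℕ, |(if ℓ < h₀ then K * t else 0) - K * lam ^ ℓ| := by
      apply iSup_congr
      intro ℓ
      rw [hfun1 ℓ]
    have hre2 : (⨆ ℓ : ℕ, |c * lam ^ ℓ / D|) = ⨆ ℓ : ℕ, |K * lam ^ ℓ| := by
      apply iSup_congr
      intro ℓ
      rw [mul_div_right_comm c (lam ^ ℓ) D]
    rw [hre1, hre2]
    calc abs ((⨆ ℓ : ℕ, |(if ℓ < h₀ then K * t else 0) - K * lam ^ ℓ|) / (⨆ ℓ : ℕ, |K * lam ^ ℓ|)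
          - max (1 - 1/(h₀:ℝ)) (1/(h₀:ℝ)))
        ≤ 24 * q := sup_part h₀ hh q K t lam hq hq1 hqh hK ht hl0 hl1 hlam8
      _ ≤ (80 * (h₀:ℝ) * 3 ^ p + 24) * q := by linarith

end

/-- strain error for integer h₀ ≥ 2: for every p ∈ [1,∞],
Err_p = C_p + O(e^{-α}) with C_p = (|1-1/h₀|^p + (h₀-1)(1/h₀)^p)^{1/p}
(C_∞ = max(1-1/h₀, 1/h₀)), and 1/2 ≤ C_p ≤ 2. -/
theorem stmt_15 (φ₀ : ℝ) (h₀ : ℕ) (hh : 2 ≤ h₀) (p : ℝ) (hp : 1 ≤ p) :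
    (1 / 2 : ℝ) ≤ (|1 - 1 / (h₀ : ℝ)| ^ p + ((h₀ : ℝ) - 1) * (1 / (h₀ : ℝ)) ^ p) ^ (1 / p) ∧
    (|1 - 1 / (h₀ : ℝ)| ^ p + ((h₀ : ℝ) - 1) * (1 / (h₀ : ℝ)) ^ p) ^ (1 / p) ≤ 2 ∧
    (1 / 2 : ℝ) ≤ max (1 - 1 / (h₀ : ℝ)) (1 / (h₀ : ℝ)) ∧
    max (1 - 1 / (h₀ : ℝ)) (1 / (h₀ : ℝ)) ≤ 2 ∧
    ∃ C α₀ : ℝ, 0 < C ∧ 0 < α₀ ∧ ∀ α : ℝ, α₀ ≤ α →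
      ∀ lam : ℝ, lam ∈ Set.Ioo (0 : ℝ) 1 →
        (let a : ℝ := deriv (deriv (morse α φ₀)) 1
         let b : ℝ := deriv (deriv (morse α φ₀)) 2
         let c : ℝ := deriv (morse α φ₀) 2
         b * lam ^ 2 + (a + 2 * b) * lam + b = 0 →
         (let ua : ℕ → ℝ := fun ℓ => c * lam ^ ℓ / (a + b * (1 + lam))
          let uscb : ℕ → ℝ := fun ℓ =>
            if ℓ < h₀ then c / ((h₀ : ℝ) * a + (4 * (h₀ : ℝ) - 2) * b) else 0
          abs ((∑' ℓ : ℕ, |uscb ℓ - ua ℓ| ^ p) ^ (1 / p) / (∑' ℓ : ℕ, |ua ℓ| ^ p) ^ (1 / p)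
              - (|1 - 1 / (h₀ : ℝ)| ^ p + ((h₀ : ℝ) - 1) * (1 / (h₀ : ℝ)) ^ p) ^ (1 / p))
            ≤ C * Real.exp (-α) ∧
          abs ((⨆ ℓ : ℕ, |uscb ℓ - ua ℓ|) / (⨆ ℓ : ℕ, |ua ℓ|)
              - max (1 - 1 / (h₀ : ℝ)) (1 / (h₀ : ℝ))) ≤ C * Real.exp (-α))) := by
  have hp0 : 0 < p := lt_of_lt_of_le one_pos hp
  have hH : (2:ℝ) ≤ (h₀:ℝ) := by exact_mod_cast hh
  have hH0 : (0:ℝ) < (h₀:ℝ) := by linarith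
  have hh2 : 1/(h₀:ℝ) ≤ 1/2 := by rw [div_le_div_iff₀ hH0 two_pos]; linarith
  have hh0 : 0 < 1/(h₀:ℝ) := by positivity
  have hA : |1 - 1/(h₀:ℝ)| = 1 - 1/(h₀:ℝ) := abs_of_nonneg (by linarith)
  have hB0 : (0:ℝ) ≤ ((h₀:ℝ) - 1) * (1/(h₀:ℝ)) ^ p :=
    mul_nonneg (by linarith) (Real.rpow_nonneg (by positivity) p)
  have hcanc : ∀ x : ℝ, 0 ≤ x → (x ^ p) ^ (1/p) = x := by
    intro x hx
    rw [← Real.rpow_mul hx, mul_one_div, div_self (ne_of_gt hp0), Real.rpow_one]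
  refine ⟨?_, ?_, ?_, ?_, ?_⟩
  · calc (1/2:ℝ) = ((1/2:ℝ) ^ p) ^ (1/p) := (hcanc _ (by norm_num)).symm
      _ ≤ (|1 - 1 / (h₀ : ℝ)| ^ p + ((h₀ : ℝ) - 1) * (1 / (h₀ : ℝ)) ^ p) ^ (1/p) := by
          apply Real.rpow_le_rpow (Real.rpow_nonneg (by norm_num) p) _ (by positivity)
          have : (1/2:ℝ) ^ p ≤ |1 - 1/(h₀:ℝ)| ^ p := by
            rw [hA]
            exact Real.rpow_le_rpow (by norm_num) (by linarith) hp0.le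
          linarith
  · calc (|1 - 1 / (h₀ : ℝ)| ^ p + ((h₀ : ℝ) - 1) * (1 / (h₀ : ℝ)) ^ p) ^ (1/p)
        ≤ ((2:ℝ) ^ p) ^ (1/p) := by
          apply Real.rpow_le_rpow _ _ (by positivity)
          · have := Real.rpow_nonneg (abs_nonneg (1 - 1/(h₀:ℝ))) p
            linarith
          · have h1 : |1 - 1/(h₀:ℝ)| ^ p ≤ 1 := by
              apply Real.rpow_le_one (abs_nonneg _) _ hp0.le
              rw [hA]; linarith
            have h2 : (1/(h₀:ℝ)) ^ p ≤ 1/(h₀:ℝ) := by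
              calc (1/(h₀:ℝ)) ^ p ≤ (1/(h₀:ℝ)) ^ (1:ℝ) :=
                  Real.rpow_le_rpow_of_exponent_ge hh0 (by linarith) hp
                _ = 1/(h₀:ℝ) := Real.rpow_one _
            have h3 : ((h₀:ℝ) - 1) * (1/(h₀:ℝ)) ^ p ≤ ((h₀:ℝ) - 1) * (1/(h₀:ℝ)) :=
              mul_le_mul_of_nonneg_left h2 (by linarith)
            have h4 : ((h₀:ℝ) - 1) * (1/(h₀:ℝ)) ≤ 1 := by
              rw [mul_one_div, div_le_one hH0]; linarith
            have h5 : (2:ℝ) ≤ 2 ^ p := by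
              calc (2:ℝ) = 2 ^ (1:ℝ) := (Real.rpow_one 2).symm
                _ ≤ 2 ^ p := Real.rpow_le_rpow_of_exponent_le (by norm_num) hp
            linarith
      _ = 2 := hcanc _ (by norm_num)
  · exact le_trans (by linarith) (le_max_left _ _)
  · apply max_le <;> linarith
  · have h3p : (0:ℝ) < 3 ^ p := Real.rpow_pos_of_pos (by norm_num) p
    refine ⟨80 * (h₀:ℝ) * 3 ^ p + 24, 32 * (h₀:ℝ) + 100, by positivity, by positivity, ?_⟩
    intro α hα lam hlam
    intro A B C heq
    have hα1 : (1:ℝ) ≤ α := by linarith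
    have hα0 : (0:ℝ) < α := by linarith
    have hqinv : Real.exp (-α) ≤ 1/α := by
      rw [Real.exp_neg]
      rw [inv_le_comm₀ (Real.exp_pos α) (by positivity)]
      have := Real.add_one_le_exp α
      rw [one_div, inv_inv]
      linarith
    have hq0 : 0 < Real.exp (-α) := Real.exp_pos _
    have hq1 : Real.exp (-α) * 100 ≤ 1 := by
      have h1 : (1:ℝ)/α ≤ 1/100 := by
        rw [div_le_div_iff₀ hα0 (by norm_num)]; linarith
      nlinarith
    have hqh : Real.exp (-α) * (32 * (h₀:ℝ)) ≤ 1 := by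
      have h1 : (1:ℝ)/α * (32 * (h₀:ℝ)) ≤ 1 := by
        rw [div_mul_eq_mul_div, div_le_one hα0]; linarith
      have h2 : Real.exp (-α) * (32 * (h₀:ℝ)) ≤ 1/α * (32 * (h₀:ℝ)) :=
        mul_le_mul_of_nonneg_right hqinv (by positivity)
      linarith
    obtain ⟨ha, hc, hb⟩ := morse_abc φ₀ α hα1
    exact core hh hp hq0 hq1 hqh ha hc hb hlam.1 hlam.2 heq
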